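/- arXiv:0704.3373 — 3 statements merged into one kernel-verified Lean document; each statement's English description precedes it below -/
import Mathlib

section
/- Fix n ≥ 1 and a nonzero vector ξ ∈ ℝⁿ; write |ξ| for its Euclidean norm. Let B and σ be real symmetric n×n matrices such that B − (trace B)·Iₙ is negative definite and σ is positive definite. Let h = (h_{ab})_{0 ≤ a,b ≤ n} be a complex symmetric (n+1)×(n+1) matrix and set tr h = Σ_{a=0}^{n} h_{aa}. Suppose that: (1) for each k = 1,…,n, 2|ξ| h_{0k} − 2i Σ_{j=1}^{n} ξ_j h_{jk} + i ξ_k (tr h) = 0; (2) 2|ξ| h_{00} − 2i Σ_{k=1}^{n} ξ_k h_{0k} − |ξ| (tr h) = 0; (3) there exists φ ∈ ℂ with h_{kl} = φ B_{kl} for all 1 ≤ k, l ≤ n; (4) |ξ| Σ_{i,j=1}^{n} σ_{ij} h_{ij} + 2i Σ_{i,j=1}^{n} σ_{ij} ξ_i h_{0j} = 0. Then h = 0. -/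
open scoped Matrix

/-- The algebraic core of ellipticity of the Bianchi-gauged linearized Einstein operator
with the boundary conditions `β(h) = 0`, `[hᵀ]_B = h₁`, `tr_σ A'_h = h₂`: the system
obtained by evaluating the symbols of the boundary operators at the root `z = i|ξ|`
has only the trivial solution. -/
theorem isometry_extension_stmt_2
    {n : ℕ} (hn : 1 ≤ n) (ξ : EuclideanSpace ℝ (Fin n)) (hξ : ξ ≠ 0)
    (B σ : Matrix (Fin n) (Fin n) ℝ) (hBsymm : B.IsSymm) (hσsymm : σ.IsSymm)
    (hBneg : ∀ x : Fin n → ℝ, x ≠ 0 → x ⬝ᵥ (B - B.trace • (1 : Matrix (Fin n) (Fin n) ℝ)).mulVec x < 0)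
    (hσpos : σ.PosDef)
    (h : Matrix (Fin (n + 1)) (Fin (n + 1)) ℂ) (hsymm : h.IsSymm)
    (h1 : ∀ k : Fin n,
      2 * (‖ξ‖ : ℂ) * h 0 k.succ - 2 * Complex.I * ∑ j : Fin n, (ξ j : ℂ) * h j.succ k.succ
        + Complex.I * (ξ k : ℂ) * h.trace = 0)
    (h2 : 2 * (‖ξ‖ : ℂ) * h 0 0 - 2 * Complex.I * ∑ k : Fin n, (ξ k : ℂ) * h 0 k.succ
        - (‖ξ‖ : ℂ) * h.trace = 0)
    (h3 : ∃ φ : ℂ, ∀ k l : Fin n, h k.succ l.succ = φ * (B k l : ℂ))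
    (h4 : (‖ξ‖ : ℂ) * ∑ i : Fin n, ∑ j : Fin n, (σ i j : ℂ) * h i.succ j.succ
        + 2 * Complex.I * ∑ i : Fin n, ∑ j : Fin n, (σ i j : ℂ) * (ξ i : ℂ) * h 0 j.succ = 0) :
    h = 0 := by
  obtain ⟨φ, hφ⟩ := h3
  set N : ℝ := ‖ξ‖ with hNdef
  have hN : 0 < N := norm_pos_iff.mpr hξ
  have hNC : (N : ℂ) ≠ 0 := by exact_mod_cast hN.ne'
  -- norm squared
  have hNsq : (N : ℝ) ^ 2 = ∑ i, ξ i ^ 2 := by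
    rw [hNdef, EuclideanSpace.norm_eq, Real.sq_sqrt (by positivity)]
    simp [sq_abs]
  have hNsqC : (N : ℂ) ^ 2 = ∑ i, (ξ i : ℂ) ^ 2 := by
    exact_mod_cast congrArg (Complex.ofReal ·) hNsq
  -- real quantities
  set Q : ℝ := ∑ k, ∑ j, ξ k * ξ j * B j k with hQdef
  set tB : ℝ := ∑ k, B k k with htBdef
  set P : ℝ := ∑ i, ∑ j, σ i j * ξ i * ξ j with hPdef
  -- trace decomposition
  have hT : h.trace = h 0 0 + φ * (tB : ℂ) := by
    rw [Matrix.trace, Fin.sum_univ_succ]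
    simp only [Matrix.diag, hφ, htBdef]
    push_cast
    rw [Finset.mul_sum]
  -- key evaluation of S := ∑ ξ_k h_{0k}
  have hSval : 2 * (N : ℂ) * (∑ k, (ξ k : ℂ) * h 0 k.succ)
      = 2 * Complex.I * φ * (Q : ℂ) - Complex.I * (N : ℂ) ^ 2 * h.trace := by
    have e1 : ∀ k ∈ Finset.univ, (ξ k : ℂ) * (2 * (N : ℂ) * h 0 k.succ)
        = 2 * Complex.I * φ * ((ξ k : ℂ) * ∑ j, (ξ j : ℂ) * (B j k : ℂ))
          - Complex.I * (ξ k : ℂ) ^ 2 * h.trace := by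
      intro k _
      have hk := h1 k
      simp only [hφ] at hk
      have : (∑ j, (ξ j : ℂ) * (φ * (B j k : ℂ))) = φ * ∑ j, (ξ j : ℂ) * (B j k : ℂ) := by
        rw [Finset.mul_sum]; exact Finset.sum_congr rfl fun j _ => by ring
      rw [this] at hk
      linear_combination (ξ k : ℂ) * hk
    calc 2 * (N : ℂ) * (∑ k, (ξ k : ℂ) * h 0 k.succ)
        = ∑ k, (ξ k : ℂ) * (2 * (N : ℂ) * h 0 k.succ) := by
          rw [Finset.mul_sum]; exact Finset.sum_congr rfl fun k _ => by ring
      _ = ∑ k, (2 * Complex.I * φ * ((ξ k : ℂ) * ∑ j, (ξ j : ℂ) * (B j k : ℂ))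
          - Complex.I * (ξ k : ℂ) ^ 2 * h.trace) := Finset.sum_congr rfl e1
      _ = 2 * Complex.I * φ * (Q : ℂ) - Complex.I * (N : ℂ) ^ 2 * h.trace := by
          have l1 : (∑ k, 2 * Complex.I * φ * ((ξ k : ℂ) * ∑ j, (ξ j : ℂ) * (B j k : ℂ)))
              = 2 * Complex.I * φ * (Q : ℂ) := by
            rw [hQdef]
            push_cast
            rw [Finset.mul_sum]
            refine Finset.sum_congr rfl fun k _ => ?_
            simp only [Finset.mul_sum]
            all_goals exact Finset.sum_congr rfl fun j _ => by ring
          have l2 : (∑ k : Fin n, Complex.I * (ξ k : ℂ) ^ 2 * h.trace)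
              = Complex.I * (N : ℂ) ^ 2 * h.trace := by
            rw [hNsqC, Finset.mul_sum, Finset.sum_mul]
            all_goals exact Finset.sum_congr rfl fun k _ => by ring
          rw [Finset.sum_sub_distrib, l1, l2]
  -- φ = 0
  have hphi0 : φ * ((Q : ℂ) - (N : ℂ) ^ 2 * (tB : ℂ)) = 0 := by
    linear_combination ((N : ℂ) * h2 + Complex.I * hSval + 2 * (N : ℂ) ^ 2 * hT) / 2
      + (φ * (Q : ℂ) - (N : ℂ) ^ 2 * h.trace / 2) * Complex.I_sq
  have hQtB : Q - N ^ 2 * tB < 0 := by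
    have hx : (fun i => ξ i : Fin n → ℝ) ≠ 0 := by
      intro hc
      apply hξ
      ext i
      exact congrFun hc i
    have := hBneg (fun i => ξ i) hx
    have expand : (fun i => ξ i) ⬝ᵥ (B - B.trace • (1 : Matrix (Fin n) (Fin n) ℝ)).mulVec (fun i => ξ i)
        = (∑ i, ∑ j, ξ i * B i j * ξ j) - tB * ∑ i, ξ i ^ 2 := by
      simp [dotProduct, Matrix.mulVec, Matrix.sub_apply, Matrix.smul_apply,
        Matrix.one_apply, Matrix.trace, Matrix.diag, mul_sub, Finset.sum_sub_distrib,
        Finset.mul_sum, mul_ite, Finset.sum_ite_eq', sq, mul_comm, mul_left_comm,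
        Finset.sum_mul, htBdef, mul_assoc]
    rw [expand, ← hNsq] at this
    have hQQ : (∑ i, ∑ j, ξ i * B i j * ξ j) = Q := by
      rw [hQdef]
      exact Finset.sum_congr rfl fun i _ => Finset.sum_congr rfl fun j _ => by
        rw [hBsymm.apply j i]; ring
    rw [hQQ] at this
    linarith
  have hφ0 : φ = 0 := by
    rcases mul_eq_zero.mp hphi0 with hh | hh
    · exact hh
    · exfalso
      apply hQtB.ne
      have : ((Q - N ^ 2 * tB : ℝ) : ℂ) = 0 := by push_cast; linear_combination hh
      exact_mod_cast this
  -- now the tangential-tangential part vanishes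
  have htt : ∀ k l : Fin n, h k.succ l.succ = 0 := fun k l => by
    rw [hφ k l, hφ0, zero_mul]
  have hT0 : h.trace = h 0 0 := by rw [hT, hφ0]; ring
  -- h 0 k from h1
  have h1' : ∀ k : Fin n, 2 * (N : ℂ) * h 0 k.succ = - Complex.I * (ξ k : ℂ) * h 0 0 := by
    intro k
    have hk := h1 k
    rw [hT0] at hk
    have hsum0 : (∑ j : Fin n, (ξ j : ℂ) * h j.succ k.succ) = 0 := by
      simp [htt]
    rw [hsum0] at hk
    linear_combination hk
  -- h4 gives h 0 0 = 0
  have hP : 0 < P := by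
    have := hσpos.dotProduct_mulVec_pos (x := fun i => ξ i) (by
      intro hc; apply hξ; ext i; exact congrFun hc i)
    have this : (0:ℝ) < (fun i => ξ i) ⬝ᵥ σ.mulVec (fun i => ξ i) := by simpa using this
    have expand : (fun i => ξ i) ⬝ᵥ σ.mulVec (fun i => ξ i) = P := by
      simp only [dotProduct, Matrix.mulVec, hPdef, Finset.mul_sum]
      exact Finset.sum_congr rfl fun i _ => Finset.sum_congr rfl fun j _ => by ring
    rw [expand] at this
    simpa using this
  have hPC : (P : ℂ) ≠ 0 := by exact_mod_cast hP.ne'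
  have hfirst : (∑ i : Fin n, ∑ j : Fin n, (σ i j : ℂ) * h i.succ j.succ) = 0 := by
    simp [htt]
  have hXval : 2 * (N : ℂ) * (∑ i : Fin n, ∑ j : Fin n, (σ i j : ℂ) * (ξ i : ℂ) * h 0 j.succ)
      = - Complex.I * h 0 0 * (P : ℂ) := by
    have : (P : ℂ) = ∑ i, ∑ j, (σ i j : ℂ) * (ξ i : ℂ) * (ξ j : ℂ) := by
      rw [hPdef]; push_cast; rfl
    rw [this, Finset.mul_sum]
    rw [show (- Complex.I * h 0 0 * ∑ i, ∑ j, (σ i j : ℂ) * (ξ i : ℂ) * (ξ j : ℂ))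
        = ∑ i, ∑ j, - Complex.I * h 0 0 * ((σ i j : ℂ) * (ξ i : ℂ) * (ξ j : ℂ)) by
      rw [Finset.mul_sum]; exact Finset.sum_congr rfl fun i _ => by rw [Finset.mul_sum]]
    refine Finset.sum_congr rfl fun i _ => ?_
    rw [Finset.mul_sum]
    refine Finset.sum_congr rfl fun j _ => ?_
    linear_combination (σ i j : ℂ) * (ξ i : ℂ) * h1' j
  have hX0 : (∑ i : Fin n, ∑ j : Fin n, (σ i j : ℂ) * (ξ i : ℂ) * h 0 j.succ) = 0 := by
    rw [hfirst, mul_zero, zero_add] at h4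
    have h2I : (2 * Complex.I : ℂ) ≠ 0 := by
      simp [Complex.I_ne_zero]
    exact (mul_eq_zero.mp h4).resolve_left h2I
  have h00 : h 0 0 = 0 := by
    rw [hX0, mul_zero] at hXval
    have := hXval.symm
    rcases mul_eq_zero.mp this with hh | hh
    · rcases mul_eq_zero.mp hh with hh2 | hh2
      · exact absurd hh2 (by simpa using Complex.I_ne_zero)
      · exact hh2
    · exact absurd hh hPC
  have h0k : ∀ k : Fin n, h 0 k.succ = 0 := by
    intro k
    have := h1' k
    rw [h00, mul_zero] at this
    have h2N : (2 * (N : ℂ)) ≠ 0 := by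
      simp [hNC]
    rcases mul_eq_zero.mp this with hh | hh
    · exact absurd hh (by simp [hNC])
    · exact hh
  ext i j
  try simp only [Matrix.zero_apply]
  refine Fin.cases ?_ (fun i' => ?_) i <;> refine Fin.cases ?_ (fun j' => ?_) j
  · exact h00
  · exact h0k j'
  · exact (hsymm.apply 0 i'.succ).trans (h0k i')
  · exact htt i' j'
end

section
/- Let H be a real Hilbert space and T : H → H a bounded linear operator whose kernel K = ker T is finite-dimensional and whose range equals the orthogonal complement Kᗮ of K. Let Q ⊆ H be a finite-dimensional subspace with dim Q = dim K such that no nonzero element of Q is orthogonal to K, and let P_Q denote the orthogonal projection of H onto Q. Then the operator T̃ = T + P_Q is a linear bijection of H onto itself. -/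
/-- If `T` is a bounded operator on a real Hilbert space with finite-dimensional kernel
`K` and range `Kᗮ`, and `Q` is a finite-dimensional subspace with `dim Q = dim K` such
that no nonzero element of `Q` is orthogonal to `K`, then `T̃ = T + P_Q` (with `P_Q`
the orthogonal projection onto `Q`) is a bijection of `H`. -/
theorem isometry_extension_stmt_5
    {H : Type*} [NormedAddCommGroup H] [InnerProductSpace ℝ H] [CompleteSpace H]
    (T : H →L[ℝ] H) [FiniteDimensional ℝ (LinearMap.ker (T : H →ₗ[ℝ] H))]
    (hrange : LinearMap.range (T : H →ₗ[ℝ] H) = (LinearMap.ker (T : H →ₗ[ℝ] H))ᗮ)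
    (Q : Submodule ℝ H) [FiniteDimensional ℝ Q]
    (hdim : Module.finrank ℝ Q = Module.finrank ℝ (LinearMap.ker (T : H →ₗ[ℝ] H)))
    (hQ : ∀ q ∈ Q, q ≠ 0 → ∃ k ∈ LinearMap.ker (T : H →ₗ[ℝ] H), (inner ℝ q k : ℝ) ≠ 0) :
    Function.Bijective fun x : H => T x + (Q.subtypeL.comp (Submodule.orthogonalProjectionOnto Q)) x := by
  classical
  set K : Submodule ℝ H := LinearMap.ker (T : H →ₗ[ℝ] H) with hKdef
  let f : Q →ₗ[ℝ] K := (Submodule.orthogonalProjectionOnto K).toLinearMap.comp Q.subtype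
  have hf_inj : Function.Injective f := by
    rw [← LinearMap.ker_eq_bot, LinearMap.ker_eq_bot']
    intro q hq0
    by_contra hne
    have hqmem : (q : H) ∈ Kᗮ := by
      rw [← Submodule.orthogonalProjectionOnto_eq_zero_iff]
      exact hq0
    obtain ⟨k, hkK, hik⟩ := hQ q q.2 (by simpa using hne)
    exact hik (by rw [real_inner_comm]; exact hqmem k hkK)
  have hf_surj : Function.Surjective f :=
    (LinearMap.injective_iff_surjective_of_finrank_eq_finrank hdim).mp hf_inj
  let g : K →ₗ[ℝ] Q := (Submodule.orthogonalProjectionOnto Q).toLinearMap.comp K.subtype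
  have hg_inj : Function.Injective g := by
    rw [← LinearMap.ker_eq_bot, LinearMap.ker_eq_bot']
    intro k hk0
    have hkQ : (k : H) ∈ Qᗮ := by
      rw [← Submodule.orthogonalProjectionOnto_eq_zero_iff]
      exact hk0
    obtain ⟨q, hq⟩ := hf_surj k
    have hsub : ((q : H) - Submodule.orthogonalProjectionOnto K q) ∈ Kᗮ :=
      Submodule.sub_starProjection_mem_orthogonal (K := K) (q : H)
    have h1 : (inner ℝ (k : H) ((q : H) - Submodule.orthogonalProjectionOnto K q) : ℝ) = 0 :=
      hsub (k : H) k.2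
    have h2 : (inner ℝ (k : H) (q : H) : ℝ) = 0 := by
      rw [real_inner_comm]
      exact hkQ (q : H) q.2
    have h3 : ((Submodule.orthogonalProjectionOnto K (q : H) : K) : H) = (k : H) :=
      congrArg Subtype.val hq
    have h4 : (inner ℝ (k : H) (k : H) : ℝ) = 0 := by
      rw [inner_sub_right, h3, h2] at h1
      linarith
    exact Subtype.ext (inner_self_eq_zero.mp h4)
  have hg_surj : Function.Surjective g :=
    (LinearMap.injective_iff_surjective_of_finrank_eq_finrank hdim.symm).mp hg_inj
  have happ : ∀ x : H, (Q.subtypeL.comp (Submodule.orthogonalProjectionOnto Q)) x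
      = ((Submodule.orthogonalProjectionOnto Q x : Q) : H) := fun _ => rfl
  -- key injectivity lemma
  have key : ∀ x : H, T x + ((Submodule.orthogonalProjectionOnto Q x : Q) : H) = 0 → x = 0 := by
    intro x hx
    have hq : ((Submodule.orthogonalProjectionOnto Q x : Q) : H) = -(T x) :=
      eq_neg_of_add_eq_zero_right hx
    have hqK : ((Submodule.orthogonalProjectionOnto Q x : Q) : H) ∈ Kᗮ := by
      rw [hq]
      exact Submodule.neg_mem _ (hrange ▸ LinearMap.mem_range_self (T : H →ₗ[ℝ] H) x)
    have hq0 : ((Submodule.orthogonalProjectionOnto Q x : Q) : H) = 0 := by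
      by_contra hne
      obtain ⟨k, hkK, hik⟩ := hQ _ (Submodule.orthogonalProjectionOnto Q x).2 hne
      exact hik (by rw [real_inner_comm]; exact hqK k hkK)
    have hTx : T x = 0 := by
      rw [hq0, add_zero] at hx; exact hx
    have hxK : x ∈ K := hTx
    have : g ⟨x, hxK⟩ = 0 := Subtype.ext (by simpa [g] using hq0)
    have := hg_inj (a₁ := ⟨x, hxK⟩) (a₂ := 0) (by simpa [map_zero] using this)
    exact congrArg Subtype.val this
  constructor
  · intro a b hab
    simp only at hab
    have hL : T (a - b) + ((Submodule.orthogonalProjectionOnto Q (a - b) : Q) : H) = 0 := by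
      calc T (a - b) + ((Submodule.orthogonalProjectionOnto Q (a - b) : Q) : H)
          = (T a + ((Submodule.orthogonalProjectionOnto Q a : Q) : H))
            - (T b + ((Submodule.orthogonalProjectionOnto Q b : Q) : H)) := by
            rw [map_sub, map_sub]; push_cast [Submodule.coe_sub]; abel
        _ = 0 := sub_eq_zero.mpr hab
    have := key _ hL
    exact sub_eq_zero.mp this
  · intro y
    obtain ⟨q, hq⟩ := hf_surj (Submodule.orthogonalProjectionOnto K y)
    have hyq : (y - (q : H)) ∈ Kᗮ := by
      rw [← Submodule.orthogonalProjectionOnto_eq_zero_iff, map_sub, sub_eq_zero]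
      exact hq.symm
    obtain ⟨u, hu⟩ : ∃ u, T u = y - (q : H) := by
      rw [← hrange] at hyq
      exact hyq
    obtain ⟨k, hk⟩ := hg_surj (q - Submodule.orthogonalProjectionOnto Q u)
    refine ⟨u + (k : H), ?_⟩
    simp only
    rw [happ, map_add, map_add]
    have hTk : T (k : H) = 0 := k.2
    have hPk : (Submodule.orthogonalProjectionOnto Q ((k : H)) : Q) = q - Submodule.orthogonalProjectionOnto Q u := hk
    rw [hTk, hPk, hu]
    push_cast [Submodule.coe_sub]
    abel
end

section
/- Let n ≥ 1 and N ≥ 1. Let Ω be a metric space, let p₁, …, p_N ∈ Ω be points with pairwise disjoint open neighborhoods U₁, …, U_N, and let A₁, …, A_N : Ω → Sym(n, ℝ) be continuous maps, each taking values in the trace-free real symmetric n×n matrices, such that for each i ∈ {1, …, N} the matrices A₁(p_i), …, A_N(p_i) are linearly independent. Then there exists a continuous map B : Ω → Sym(n, ℝ) such that B(x) is positive semidefinite for every x ∈ Ω, B vanishes outside U₁ ∪ … ∪ U_N, and for every nonzero coefficient vector (c₁, …, c_N) ∈ ℝᴺ there exists an index i with trace(B(p_i)·Σ_{j=1}^{N}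 c_j A_j(p_i)) ≠ 0. -/
open Matrix Submodule Set

-- PSD of outer product
lemma psd_outer {n : ℕ} (v : Fin n → ℝ) : (Matrix.vecMulVec v v).PosSemidef := by
  refine Matrix.PosSemidef.of_dotProduct_mulVec_nonneg ?_ ?_
  · ext a b
    simp [Matrix.conjTranspose_apply, Matrix.vecMulVec_apply, mul_comm]
  · intro x
    have h : star x ⬝ᵥ (Matrix.vecMulVec v v) *ᵥ x = (v ⬝ᵥ x) * (v ⬝ᵥ x) := by
      simp [dotProduct, Matrix.mulVec, Matrix.vecMulVec_apply, Finset.mul_sum,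
        Finset.sum_mul, mul_assoc, mul_comm, mul_left_comm]
    rw [h]
    exact mul_self_nonneg _

lemma psd_smul {n : ℕ} {M : Matrix (Fin n) (Fin n) ℝ} (hM : M.PosSemidef) {r : ℝ}
    (hr : 0 ≤ r) : (r • M).PosSemidef := by
  refine Matrix.PosSemidef.of_dotProduct_mulVec_nonneg ?_ ?_
  · have := hM.1
    rw [Matrix.IsHermitian] at this ⊢
    rw [Matrix.conjTranspose_smul, this, star_trivial]
  · intro x
    have : star x ⬝ᵥ (r • M) *ᵥ x = r * (star x ⬝ᵥ M *ᵥ x) := by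
      rw [Matrix.smul_mulVec, dotProduct_smul, smul_eq_mul]
    rw [this]
    exact mul_nonneg hr (hM.dotProduct_mulVec_nonneg x)

-- quadratic form vanishing implies symmetric matrix zero
lemma symm_quad_zero {n : ℕ} (T : Matrix (Fin n) (Fin n) ℝ) (hT : T.IsSymm)
    (h : ∀ v : Fin n → ℝ, v ⬝ᵥ T *ᵥ v = 0) : T = 0 := by
  ext a b
  have key : ∀ x y : Fin n → ℝ, x ⬝ᵥ T *ᵥ y + y ⬝ᵥ T *ᵥ x = 0 := by
    intro x y
    have := h (x + y)
    rw [add_dotProduct, Matrix.mulVec_add, dotProduct_add,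
      dotProduct_add] at this
    rw [h x, h y] at this
    linarith
  have h1 := key (Pi.single a 1) (Pi.single b 1)
  have e1 : (Pi.single a 1 : Fin n → ℝ) ⬝ᵥ T *ᵥ Pi.single b 1 = T a b := by
    simp [Matrix.mulVec_single, single_dotProduct, dotProduct_single]
  have e2 : (Pi.single b 1 : Fin n → ℝ) ⬝ᵥ T *ᵥ Pi.single a 1 = T b a := by
    simp [Matrix.mulVec_single, single_dotProduct, dotProduct_single]
  have hsymm : T b a = T a b := congrFun (congrFun hT a) b
  rw [e1, e2, hsymm] at h1
  have : T a b = 0 := by linarith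
  simpa using this

-- key: images of outer products escape any proper subspace
lemma key_escape {n N : ℕ} (E : Fin N → Matrix (Fin n) (Fin n) ℝ)
    (hEsymm : ∀ j, (E j).IsSymm)
    (hEind : LinearIndependent ℝ E)
    (W : Submodule ℝ (Fin N → ℝ)) (hW : W ≠ ⊤) :
    ∃ v : Fin n → ℝ, (fun j => (Matrix.vecMulVec v v * E j).trace) ∉ W := by
  by_contra hcon
  push_neg at hcon
  obtain ⟨y, hy⟩ : ∃ y : Fin N → ℝ, y ∉ W := by
    by_contra hy
    push_neg at hy
    exact hW (Submodule.eq_top_iff'.mpr hy)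
  obtain ⟨f, hfy, hfW⟩ := Submodule.exists_dual_map_eq_bot_of_notMem hy inferInstance
  have hfzero : ∀ w ∈ W, f w = 0 := by
    intro w hw
    have : f w ∈ W.map f := Submodule.mem_map_of_mem hw
    rw [hfW] at this
    simpa using this
  -- f expressed via coordinates
  have hf_expand : ∀ u : Fin N → ℝ, f u = ∑ j, u j * f (Pi.single j 1) := by
    intro u
    conv_lhs => rw [pi_eq_sum_univ u]
    rw [map_sum]
    congr 1; ext j
    have : (u j • (fun j1 => if j = j1 then (1:ℝ) else 0)) = u j • (Pi.single j 1 : Fin N → ℝ) := by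
      congr 1; ext a; simp [Pi.single_apply, eq_comm]
    rw [this, _root_.map_smul, smul_eq_mul]
  set T : Matrix (Fin n) (Fin n) ℝ := ∑ j, f (Pi.single j 1) • E j with hTdef
  have hTsymm : T.IsSymm := by
    rw [Matrix.IsSymm, hTdef, Matrix.transpose_sum]
    congr 1; ext j
    rw [Matrix.transpose_smul, hEsymm j]
  have hTquad : ∀ v : Fin n → ℝ, v ⬝ᵥ T *ᵥ v = 0 := by
    intro v
    have h1 : (Matrix.vecMulVec v v * T).trace = 0 := by
      rw [hTdef, Matrix.mul_sum]
      rw [Matrix.trace_sum]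
      have := hfzero _ (hcon v)
      rw [hf_expand] at this
      rw [← this]
      congr 1; ext j
      rw [Matrix.mul_smul, Matrix.trace_smul, smul_eq_mul, mul_comm]
    have h2 : (Matrix.vecMulVec v v * T).trace = v ⬝ᵥ T *ᵥ v := by
      simp only [Matrix.trace, Matrix.diag, Matrix.mul_apply, Matrix.vecMulVec_apply,
        dotProduct, Matrix.mulVec, Finset.mul_sum]
      rw [Finset.sum_comm]
      congr 1; ext b
      congr 1; ext a
      ring
    rw [← h2, h1]
  have hT0 : T = 0 := symm_quad_zero T hTsymm hTquad
  have hfj : ∀ j, f (Pi.single j 1) = 0 :=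
    Fintype.linearIndependent_iff.mp hEind (fun j => f (Pi.single j 1)) (by rw [← hTdef]; exact hT0)
  have : f y = 0 := by
    rw [hf_expand]
    simp [hfj]
  exact hfy this

-- greedy selection
lemma greedy {N : ℕ} (S : Fin N → Set (Fin N → ℝ))
    (hS : ∀ (i : Fin N) (W : Submodule ℝ (Fin N → ℝ)), W ≠ ⊤ → ∃ x ∈ S i, x ∉ W) :
    ∃ w : Fin N → (Fin N → ℝ), (∀ i, w i ∈ S i) ∧ LinearIndependent ℝ w := by
  suffices h : ∀ m (hm : m ≤ N), ∃ w : Fin m → (Fin N → ℝ),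
      (∀ i : Fin m, w i ∈ S (Fin.castLE hm i)) ∧ LinearIndependent ℝ w by
    obtain ⟨w, hw1, hw2⟩ := h N le_rfl
    exact ⟨w, fun i => by simpa using hw1 i, hw2⟩
  intro m
  induction m with
  | zero => exact fun _ => ⟨Fin.elim0, fun i => i.elim0, linearIndependent_empty_type⟩
  | succ k ih =>
    intro hm
    obtain ⟨w, hw1, hw2⟩ := ih (Nat.le_of_succ_le hm)
    have hWne : Submodule.span ℝ (Set.range w) ≠ ⊤ := by
      intro htop
      have hb : Nonempty (Fin k) ∨ k = 0 := by
        rcases Nat.eq_zero_or_pos k with h | h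
        · exact Or.inr h
        · exact Or.inl ⟨⟨0, h⟩⟩
      have hrank : Module.finrank ℝ (Fin N → ℝ) = N := Module.finrank_fin_fun ℝ
      have : Module.finrank ℝ (Fin N → ℝ) = k := by
        rw [Module.finrank_eq_card_basis (Module.Basis.mk hw2 htop.ge)]
        simp
      omega
    obtain ⟨x, hxS, hxW⟩ := hS (Fin.castLE hm (Fin.last k)) _ hWne
    refine ⟨Fin.snoc w x, ?_, linearIndependent_fin_snoc.mpr ⟨hw2, hxW⟩⟩
    intro i
    refine Fin.lastCases ?_ ?_ i
    · rw [Fin.snoc_last]; exact hxS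
    · intro j
      rw [Fin.snoc_castSucc]
      exact hw1 j

/-- The bump-function/Gram–Schmidt construction of the Appendix: given points `p i` with
pairwise disjoint open neighborhoods `U i` and continuous trace-free symmetric-matrix
valued maps `A j` whose values at each point `p i` are linearly independent, there is a
continuous positive semidefinite symmetric-matrix valued map `B`, vanishing outside
`⋃ U i`, such that every nonzero combination `Σ cⱼ Aⱼ` pairs nontrivially with `B` at
some point `p i` (with respect to the trace inner product). -/
theorem isometry_extension_stmt_10
    {n N : ℕ} (hn : 1 ≤ n) (hN : 1 ≤ N)
    {Ω : Type*} [MetricSpace Ω]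
    (p : Fin N → Ω) (U : Fin N → Set Ω)
    (hUopen : ∀ i, IsOpen (U i)) (hpU : ∀ i, p i ∈ U i)
    (hdisj : ∀ i j, i ≠ j → Disjoint (U i) (U j))
    (A : Fin N → Ω → Matrix (Fin n) (Fin n) ℝ)
    (hAcont : ∀ j, Continuous (A j))
    (hAsymm : ∀ j x, (A j x).IsSymm)
    (hAtr : ∀ j x, (A j x).trace = 0)
    (hindep : ∀ i : Fin N, LinearIndependent ℝ fun j : Fin N => A j (p i)) :
    ∃ B : Ω → Matrix (Fin n) (Fin n) ℝ,
      Continuous B ∧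
      (∀ x, (B x).PosSemidef) ∧
      (∀ x, x ∉ ⋃ i, U i → B x = 0) ∧
      ∀ c : Fin N → ℝ, c ≠ 0 →
        ∃ i, (B (p i) * ∑ j : Fin N, c j • A j (p i)).trace ≠ 0 := by
  classical
  have hr : ∀ i, ∃ r > 0, Metric.ball (p i) r ⊆ U i := fun i =>
    Metric.isOpen_iff.mp (hUopen i) _ (hpU i)
  choose r hrpos hrball using hr
  set bump : Fin N → Ω → ℝ := fun i x => max (1 - dist x (p i) / r i) 0 with hbump
  have bump_cont : ∀ i, Continuous (bump i) := by
    intro i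
    exact (continuous_const.sub ((continuous_id.dist continuous_const).div_const _)).max
      continuous_const
  have bump_nonneg : ∀ i x, 0 ≤ bump i x := fun i x => le_max_right _ _
  have bump_self : ∀ i, bump i (p i) = 1 := by
    intro i; simp [hbump]
  have bump_out : ∀ i x, x ∉ U i → bump i x = 0 := by
    intro i x hx
    by_contra h
    have h1 : 0 < bump i x := lt_of_le_of_ne (bump_nonneg i x) (Ne.symm h)
    have h2 : 0 < 1 - dist x (p i) / r i := by
      rcases lt_max_iff.mp h1 with h | h
      · exact h
      · exact absurd h (lt_irrefl 0)
    have h3 : dist x (p i) < r i := by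
      exact (div_lt_one (hrpos i)).mp (sub_pos.mp h2)
    exact hx (hrball i (Metric.mem_ball.mpr h3))
  obtain ⟨w, hwS, hwind⟩ := greedy
    (fun i => Set.range (fun v : Fin n → ℝ => fun j => (Matrix.vecMulVec v v * A j (p i)).trace))
    (fun i W hW => by
      obtain ⟨v, hv⟩ := key_escape (fun j => A j (p i)) (fun j => hAsymm j _) (hindep i) W hW
      exact ⟨_, ⟨v, rfl⟩, hv⟩)
  choose vv hvv using hwS
  set M : Fin N → Matrix (Fin n) (Fin n) ℝ := fun i => Matrix.vecMulVec (vv i) (vv i) with hM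
  refine ⟨fun x => ∑ i, bump i x • M i, ?_, ?_, ?_, ?_⟩
  · exact continuous_finset_sum _ fun i _ => (bump_cont i).smul continuous_const
  · intro x
    exact Finset.sum_induction _ Matrix.PosSemidef (fun a b ha hb => ha.add hb)
      Matrix.PosSemidef.zero (fun i _ => psd_smul (psd_outer _) (bump_nonneg i x))
  · intro x hx
    refine Finset.sum_eq_zero fun i _ => ?_
    rw [bump_out i x (fun hxi => hx (Set.mem_iUnion.mpr ⟨i, hxi⟩)), zero_smul]
  · have hBp : ∀ i, (∑ j, bump j (p i) • M j) = M i := by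
      intro i
      rw [Finset.sum_eq_single i]
      · rw [bump_self, one_smul]
      · intro j _ hj
        have : p i ∉ U j := Set.disjoint_right.mp (hdisj j i hj) (hpU i)
        rw [bump_out j _ this, zero_smul]
      · intro h; exact absurd (Finset.mem_univ i) h
    intro c hc
    by_contra h
    push_neg at h
    have htr : ∀ i, ∑ j, c j * w i j = 0 := by
      intro i
      have h0 := h i
      rw [hBp i] at h0
      rw [← h0, Matrix.mul_sum, Matrix.trace_sum]
      congr 1; ext j
      rw [Matrix.mul_smul, Matrix.trace_smul, smul_eq_mul]
      have := congrFun (hvv i) j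
      rw [← this, hM]
    -- linear functional u ↦ Σ c j * u j
    set g : (Fin N → ℝ) →ₗ[ℝ] ℝ :=
      { toFun := fun u => ∑ j, c j * u j
        map_add' := by intro u v; simp [mul_add, Finset.sum_add_distrib]
        map_smul' := by intro a u; simp [Finset.mul_sum, mul_comm, mul_left_comm] } with hg
    have hspan : Submodule.span ℝ (Set.range w) = ⊤ := by
      have : Nonempty (Fin N) := ⟨⟨0, hN⟩⟩
      exact hwind.span_eq_top_of_card_eq_finrank (by simp [Module.finrank_fin_fun])
    have hg0 : g = 0 := by
      apply LinearMap.ext_on hspan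
      rintro x ⟨i, rfl⟩
      simpa [hg] using htr i
    obtain ⟨j, hj⟩ := Function.ne_iff.mp hc
    have : g (Pi.single j 1) = c j := by
      simp [hg, Pi.single_apply, mul_ite, Finset.sum_ite_eq']
    rw [hg0] at this
    exact hj (by simpa using this.symm)
end
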